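/- Let H be a real inner product space, x₁,…,x_n points of a normed space, and Y₁,…,Y_n ∈ 𝒴 with feature vectors φ(Y₁),…,φ(Y_n) ∈ H. Let K ∈ ℝ^{n×n} be the Gram matrix K_{ij} = ⟨φ(Y_i), φ(Y_j)⟩ and let M be a symmetric matrix with M² = K. Then the empirical kernel distance covariance computed with b_{kl} = ‖φ(Y_k) − φ(Y_l)‖ equals the empirical distance covariance computed with the columns of M as responses: letting A be the double-centering of a_{kl} = ‖x_k − x_l‖, B the double-centering of b_{kl} = ‖φ(Y_k) − φ(Y_l)‖, and B̃ the double-centering of b̃_{kl} = ‖M(:,k) − M(:,l)‖₂, one has B = B̃ and hence (1/n²) Σ_{k,l=1}^n A_{kl} B_{kl} = (1/n²) Σ_{k,l=1}^n A_{kl} B̃_{kl}. -/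

import Mathlib

open Finset

/-- The empirical kernel distance covariance computed with
`b_{kl} = ‖φ(Y_k) − φ(Y_l)‖` equals the empirical distance covariance computed
with the columns of a symmetric square root `M` of the Gram matrix
`K_{ij} = ⟨φ(Y_i), φ(Y_j)⟩` as responses: the double-centerings satisfy
`B = B̃` and hence `(1/n²) Σ A_{kl} B_{kl} = (1/n²) Σ A_{kl} B̃_{kl}`. -/
theorem kdcov_eq_dcov_of_sqrt_gram
    {E H 𝒴 : Type*} [NormedAddCommGroup E]
    [NormedAddCommGroup H] [InnerProductSpace ℝ H]
    (n : ℕ) (hn : 1 ≤ n) (x : Fin n → E) (Y : Fin n → 𝒴) (φ : 𝒴 → H)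
    (K M : Matrix (Fin n) (Fin n) ℝ)
    (hK : ∀ i j, K i j = (inner ℝ (φ (Y i)) (φ (Y j)) : ℝ))
    (hM : M.IsSymm) (hMsq : M * M = K)
    (a b bt A B Bt : Matrix (Fin n) (Fin n) ℝ)
    (hab : ∀ k l, a k l = ‖x k - x l‖)
    (hbb : ∀ k l, b k l = ‖φ (Y k) - φ (Y l)‖)
    (hbt : ∀ k l, bt k l = Real.sqrt (∑ i, (M i k - M i l) ^ 2))
    (hA : ∀ k l, A k l =
      a k l - (1 / (n : ℝ)) * ∑ l', a k l'
            - (1 / (n : ℝ)) * ∑ k', a k' l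
            + (1 / (n : ℝ) ^ 2) * ∑ k', ∑ l', a k' l')
    (hB : ∀ k l, B k l =
      b k l - (1 / (n : ℝ)) * ∑ l', b k l'
            - (1 / (n : ℝ)) * ∑ k', b k' l
            + (1 / (n : ℝ) ^ 2) * ∑ k', ∑ l', b k' l')
    (hBt : ∀ k l, Bt k l =
      bt k l - (1 / (n : ℝ)) * ∑ l', bt k l'
             - (1 / (n : ℝ)) * ∑ k', bt k' l
             + (1 / (n : ℝ) ^ 2) * ∑ k', ∑ l', bt k' l') :
    B = Bt ∧
      (1 / (n : ℝ) ^ 2) * ∑ k, ∑ l, A k l * B k l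
        = (1 / (n : ℝ) ^ 2) * ∑ k, ∑ l, A k l * Bt k l := by
  have hsym : ∀ i j, M i j = M j i := fun i j => (Matrix.IsSymm.apply hM j i)
  have key : ∀ k l, b k l = bt k l := by
    intro k l
    rw [hbb, hbt]
    rw [← Real.sqrt_sq (norm_nonneg (φ (Y k) - φ (Y l)))]
    congr 1
    have h1 : ‖φ (Y k) - φ (Y l)‖ ^ 2
        = K k k - 2 * K k l + K l l := by
      rw [hK, hK, hK, @norm_sub_sq_real, real_inner_self_eq_norm_sq,
        real_inner_self_eq_norm_sq]
      try ring
    have h2 : ∀ p q : Fin n, K p q = ∑ i, M i p * M i q := by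
      intro p q
      rw [← hMsq, Matrix.mul_apply]
      exact Finset.sum_congr rfl fun i _ => by rw [hsym p i]
    simp only [h1, h2, Finset.mul_sum]
    rw [← Finset.sum_sub_distrib, ← Finset.sum_add_distrib]
    exact (Finset.sum_congr rfl fun i _ => by ring).symm
  have hBBt : B = Bt := by
    ext k l
    simp only [hB, hBt, key]
  exact ⟨hBBt, by rw [hBBt]⟩
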